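/- For f : ℝ × ℝ → ℝ, define the Lorentzian metric g_f on ℝ³ (coordinates (x,y,z)) as the map assigning to each point p = (x,y,z) the symmetric bilinear form on ℝ³ given by g_f(p)(u,v) = −2·f(x,y)·u₁v₁ + u₂v₂ + u₁v₃ + u₃v₁. Let f : ℝ × ℝ → ℝ be any function, let β : ℝ → ℝ be twice differentiable, and define T : ℝ³ → ℝ³ by T(x,y,z) = (x, y − β(x), z + y·β'(x)) and f̃ : ℝ × ℝ → ℝ by f̃(x,y) = f(x, y − β(x)) − (1/2)·(β'(x)² + 2·y·β''(x)). Then T pulls g_f back to g_{f̃}: for every p ∈ ℝ³ and all u, v ∈ ℝ³, g_f(T(p))(DT_p u, DT_p v) = g_{f̃}(p)(u, v), where DT_p is the Fréchet derivative of T at p. -/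

import Mathlib

/-- The Walker Lorentzian metric on `ℝ³` determined by `f`:
`g_f(p)(u,v) = -2 f(x,y) u₁v₁ + u₂v₂ + u₁v₃ + u₃v₁` at `p = (x,y,z)`. -/
def gWalker (f : ℝ × ℝ → ℝ) (p : ℝ × ℝ × ℝ) (u v : ℝ × ℝ × ℝ) : ℝ :=
  -2 * f (p.1, p.2.1) * u.1 * v.1 + u.2.1 * v.2.1 + u.1 * v.2.2 + u.2.2 * v.1

theorem stmt3 (f : ℝ × ℝ → ℝ) (β β' β'' : ℝ → ℝ)
    (hβ : ∀ x, HasDerivAt β (β' x) x)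
    (hβ' : ∀ x, HasDerivAt β' (β'' x) x)
    (T : ℝ × ℝ × ℝ → ℝ × ℝ × ℝ)
    (hT : ∀ p : ℝ × ℝ × ℝ, T p = (p.1, p.2.1 - β p.1, p.2.2 + p.2.1 * β' p.1))
    (ftil : ℝ × ℝ → ℝ)
    (hftil : ∀ q : ℝ × ℝ,
      ftil q = f (q.1, q.2 - β q.1) - (1 / 2) * (β' q.1 ^ 2 + 2 * q.2 * β'' q.1)) :
    ∀ (p u v : ℝ × ℝ × ℝ),
      gWalker f (T p) (fderiv ℝ T p u) (fderiv ℝ T p v) = gWalker ftil p u v := by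
  intro p u v
  have hTfun : T = fun p : ℝ × ℝ × ℝ => (p.1, p.2.1 - β p.1, p.2.2 + p.2.1 * β' p.1) :=
    funext hT
  set A : (ℝ × ℝ × ℝ) →L[ℝ] ℝ := ContinuousLinearMap.fst ℝ ℝ (ℝ × ℝ) with hA
  set B : (ℝ × ℝ × ℝ) →L[ℝ] ℝ :=
    (ContinuousLinearMap.fst ℝ ℝ ℝ).comp (ContinuousLinearMap.snd ℝ ℝ (ℝ × ℝ)) with hB
  set C : (ℝ × ℝ × ℝ) →L[ℝ] ℝ :=
    (ContinuousLinearMap.snd ℝ ℝ ℝ).comp (ContinuousLinearMap.snd ℝ ℝ (ℝ × ℝ)) with hC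
  have h1 : HasFDerivAt (fun q : ℝ × ℝ × ℝ => q.1) A p := hasFDerivAt_fst
  have h2 : HasFDerivAt (fun q : ℝ × ℝ × ℝ => q.2.1) B p :=
    hasFDerivAt_fst.comp p hasFDerivAt_snd
  have h3 : HasFDerivAt (fun q : ℝ × ℝ × ℝ => q.2.2) C p :=
    hasFDerivAt_snd.comp p hasFDerivAt_snd
  have hb : HasFDerivAt (fun q : ℝ × ℝ × ℝ => β q.1) (β' p.1 • A) p :=
    (hβ p.1).comp_hasFDerivAt p h1
  have hb' : HasFDerivAt (fun q : ℝ × ℝ × ℝ => β' q.1) (β'' p.1 • A) p :=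
    (hβ' p.1).comp_hasFDerivAt p h1
  have hmul : HasFDerivAt (fun q : ℝ × ℝ × ℝ => q.2.1 * β' q.1)
      (p.2.1 • (β'' p.1 • A) + β' p.1 • B) p := h2.mul hb'
  have hTd : HasFDerivAt T
      (A.prod ((B - β' p.1 • A).prod (C + (p.2.1 • (β'' p.1 • A) + β' p.1 • B)))) p := by
    rw [hTfun]
    exact HasFDerivAt.prodMk h1 (HasFDerivAt.prodMk (HasFDerivAt.sub h2 hb) (HasFDerivAt.add h3 hmul))
  rw [hTd.fderiv, hT p]
  simp only [gWalker, hftil (p.1, p.2.1), ContinuousLinearMap.prod_apply, ContinuousLinearMap.sub_apply,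
    ContinuousLinearMap.add_apply, ContinuousLinearMap.smul_apply,
    ContinuousLinearMap.coe_comp', Function.comp_apply, ContinuousLinearMap.coe_fst',
    ContinuousLinearMap.coe_snd', smul_eq_mul, hA, hB, hC]
  ring
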